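/- arXiv:2404.02413 — 2 statements merged into one kernel-verified Lean document; each statement's English description precedes it below -/
import Mathlib

section
/- For every real number x and every integer r ≥ 0, for all t in a neighborhood of 0 on which the moment generating function of Y is finite, one has e^{x(E[e^{tY}] − 1)} · e^{rt} = Σ_{n=0}^{∞} φ_{n,r}^{Y}(x) · t^n/n! (the series converging for such t). -/
open MeasureTheory ProbabilityTheory Finset

/-- The probabilistic `r`-Stirling numbers of the second kind associated with a random
variable (with iid copies `Ys`):
`{n+r \brace k+r}_{r,Y} = (1/k!) Σ_{j=0}^k binom(k,j) (-1)^(k-j) E[(S_j + r)^n]`,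
where `S_j = Y_1 + ⋯ + Y_j`. -/
noncomputable def probStirling {Ω : Type*} [MeasurableSpace Ω] (μ : Measure Ω)
    (Ys : ℕ → Ω → ℝ) (r n k : ℕ) : ℝ :=
  (1 / (Nat.factorial k : ℝ)) * ∑ j ∈ Finset.range (k + 1),
    (k.choose j : ℝ) * (-1) ^ (k - j) *
      ∫ ω, ((∑ i ∈ Finset.range j, Ys i ω) + (r : ℝ)) ^ n ∂μ

/-- The probabilistic `r`-Bell polynomials associated with a random variable:
`φ_{n,r}^Y(x) = Σ_{k=0}^n {n+r \brace k+r}_{r,Y} x^k`. -/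
noncomputable def probBell {Ω : Type*} [MeasurableSpace Ω] (μ : Measure Ω)
    (Ys : ℕ → Ω → ℝ) (r n : ℕ) (x : ℝ) : ℝ :=
  ∑ k ∈ Finset.range (n + 1), probStirling μ Ys r n k * x ^ k

private lemma hasSum_exp_real (z : ℝ) :
    HasSum (fun n : ℕ => z ^ n / (Nat.factorial n : ℝ)) (Real.exp z) := by
  have h := NormedSpace.expSeries_div_hasSum_exp z
  rwa [← Real.exp_eq_exp_ℝ] at h

private lemma exp_mul_abs_le (u a : ℝ) :
    Real.exp (u * |a|) ≤ Real.exp (u * a) + Real.exp (-u * a) := by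
  rcases abs_cases a with ⟨h, _⟩ | ⟨h, _⟩ <;> rw [h]
  · linarith [Real.exp_pos (-u * a)]
  · have h2 : u * -a = -u * a := by ring
    rw [h2]; linarith [Real.exp_pos (u * a)]

private lemma abs_pow_le_exp {u : ℝ} (hu : 0 < u) (a : ℝ) (n : ℕ) :
    |a| ^ n ≤ (Nat.factorial n : ℝ) * (1 / u) ^ n * Real.exp (u * |a|) := by
  have hfac : (0:ℝ) < (Nat.factorial n : ℝ) := by positivity
  have h := le_hasSum (hasSum_exp_real (u * |a|)) n (fun j _ => by positivity)
  have h2 : (u * |a|) ^ n ≤ (Nat.factorial n : ℝ) * Real.exp (u * |a|) := by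
    rw [div_le_iff₀ hfac] at h; linarith
  have key : |a| ^ n = (1 / u) ^ n * (u * |a|) ^ n := by
    rw [← mul_pow]; congr 1; field_simp
  rw [key]
  calc (1 / u) ^ n * (u * |a|) ^ n
      ≤ (1 / u) ^ n * ((Nat.factorial n : ℝ) * Real.exp (u * |a|)) := by
        apply mul_le_mul_of_nonneg_left h2 (by positivity)
    _ = (Nat.factorial n : ℝ) * (1 / u) ^ n * Real.exp (u * |a|) := by ring

private lemma fwdDiff_iter_zero_eq (a : ℕ → ℝ) (k : ℕ) :
    (fwdDiff (1:ℕ))^[k] a 0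
      = ∑ j ∈ Finset.range (k + 1), (k.choose j : ℝ) * (-1) ^ (k - j) * a j := by
  rw [fwdDiff_iter_eq_sum_shift]
  refine Finset.sum_congr rfl fun j hj => ?_
  have : (0 : ℕ) + j • (1:ℕ) = j := by simp
  rw [this, zsmul_eq_mul]
  push_cast
  ring

private lemma delta_vanish (a : ℕ → ℕ → ℝ) (c : ℕ → ℕ → ℝ)
    (h : ∀ n j, a n (j + 1) = a n j + ∑ i ∈ Finset.range n, c n i * a i j) :
    ∀ n k, n < k → (fwdDiff (1:ℕ))^[k] (a n) 0 = 0 := by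
  intro n
  induction n using Nat.strong_induction_on with
  | _ n IH =>
    intro k hk
    obtain ⟨k', rfl⟩ : ∃ k', k = k' + 1 := ⟨k - 1, by omega⟩
    rw [Function.iterate_succ_apply]
    have hΔ : fwdDiff (1:ℕ) (a n) = ∑ i ∈ Finset.range n, c n i • a i := by
      funext j
      simp only [fwdDiff, Finset.sum_apply, Pi.smul_apply, smul_eq_mul]
      rw [h n j]
      ring
    rw [hΔ, fwdDiff_iter_finset_sum, Finset.sum_apply]
    refine Finset.sum_eq_zero fun i hi => ?_
    have hin := Finset.mem_range.mp hi
    rw [fwdDiff_iter_const_smul, Pi.smul_apply, IH i hin k' (by omega), smul_zero]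

/-- partial sums `S_j`. -/
private def Sm {Ω : Type*} (Ys : ℕ → Ω → ℝ) (j : ℕ) (ω : Ω) : ℝ :=
  ∑ i ∈ Finset.range j, Ys i ω

/-- moments `E[(S_j + r)^n]`. -/
private noncomputable def mm {Ω : Type*} [MeasurableSpace Ω] (μ : Measure Ω)
    (Ys : ℕ → Ω → ℝ) (r n j : ℕ) : ℝ :=
  ∫ ω, (Sm Ys j ω + (r : ℝ)) ^ n ∂μ

set_option maxHeartbeats 2000000 in
/-- Generating function of the probabilistic `r`-Bell polynomials: for `t` in a
neighborhood of `0` on which the mgf of `Y` is finite,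
`e^{x(E[e^{tY}] - 1)} e^{rt} = Σ_{n=0}^∞ φ_{n,r}^Y(x) t^n/n!`. -/
theorem probBell_generating_function
    {Ω : Type*} [MeasurableSpace Ω] (μ : Measure Ω) [IsProbabilityMeasure μ]
    (Y : Ω → ℝ) (Ys : ℕ → Ω → ℝ)
    (hY : Measurable Y) (hYs : ∀ i, Measurable (Ys i))
    (hindep : iIndepFun Ys μ)
    (hident : ∀ i, IdentDistrib (Ys i) Y μ μ)
    (ε : ℝ) (hε : 0 < ε)
    (hmgf : ∀ t : ℝ, |t| < ε → Integrable (fun ω => Real.exp (t * Y ω)) μ)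
    (x : ℝ) (r : ℕ) :
    ∃ δ : ℝ, 0 < δ ∧ δ ≤ ε ∧ ∀ t : ℝ, |t| < δ →
      HasSum (fun n : ℕ => probBell μ Ys r n x * t ^ n / (Nat.factorial n : ℝ))
        (Real.exp (x * ((∫ ω, Real.exp (t * Y ω) ∂μ) - 1)) * Real.exp (r * t)) := by
  classical
  have hu0 : (0:ℝ) < ε / 2 := by linarith
  refine ⟨ε / 2, hu0, by linarith, ?_⟩
  set u : ℝ := ε / 2 with hudef
  have huε : |u| < ε := by rw [abs_of_pos hu0]; simp only [hudef]; linarith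
  have hnuε : |(-u)| < ε := by rwa [abs_neg]
  intro t ht
  have htu : |t| < u := ht
  have htε : |t| < ε := by calc |t| < u := htu
                               _ < ε := by simp only [hudef]; linarith
  -- basic measurability
  have hSmeas : ∀ j, Measurable (Sm Ys j) := by
    intro j
    unfold Sm
    exact Finset.measurable_sum _ fun i _ => hYs i
  -- the bridging identity with probStirling
  have hstir : ∀ n k : ℕ, probStirling μ Ys r n k
      = (1 / (Nat.factorial k : ℝ)) * ∑ j ∈ Finset.range (k + 1),
          (k.choose j : ℝ) * (-1) ^ (k - j) * mm μ Ys r n j := fun n k => rfl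
  -- integrability of exponentials
  have hYsint : ∀ v : ℝ, |v| < ε → ∀ i, Integrable (fun ω => Real.exp (v * Ys i ω)) μ := by
    intro v hv i
    exact ((hident i).comp ((measurable_id.const_mul v).exp)).integrable_iff.mpr (hmgf v hv)
  have hSint_exp : ∀ v : ℝ, |v| < ε → ∀ j, Integrable (fun ω => Real.exp (v * Sm Ys j ω)) μ := by
    intro v hv j
    have h := hindep.integrable_exp_mul_sum (t := v) hYs (s := Finset.range j)
      (fun i _ => hYsint v hv i)
    simpa [Sm, Finset.sum_apply] using h
  have hmgfS : ∀ v : ℝ, |v| < ε → ∀ j,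
      ∫ ω, Real.exp (v * Sm Ys j ω) ∂μ = (∫ ω, Real.exp (v * Y ω) ∂μ) ^ j := by
    intro v hv j
    have hsum_eq : mgf (∑ i ∈ Finset.range j, Ys i) μ v
        = ∫ ω, Real.exp (v * Sm Ys j ω) ∂μ := by
      simp only [mgf, Sm, Finset.sum_apply]
    rw [← hsum_eq, hindep.mgf_sum hYs]
    have hmg : ∀ i ∈ Finset.range j, mgf (Ys i) μ v = ∫ ω, Real.exp (v * Y ω) ∂μ := by
      intro i _
      exact ((hident i).comp ((measurable_id.const_mul v).exp)).integral_eq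
    rw [Finset.prod_congr rfl hmg, Finset.prod_const, Finset.card_range]
  -- abbreviations for the mgf values
  set Mu : ℝ := ∫ ω, Real.exp (u * Y ω) ∂μ with hMudef
  set Mnu : ℝ := ∫ ω, Real.exp (-u * Y ω) ∂μ with hMnudef
  set Mt : ℝ := ∫ ω, Real.exp (t * Y ω) ∂μ with hMtdef
  have hMu0 : 0 ≤ Mu := integral_nonneg fun ω => (Real.exp_pos _).le
  have hMnu0 : 0 ≤ Mnu := integral_nonneg fun ω => (Real.exp_pos _).le
  set C : ℝ := Mu + Mnu with hCdef
  have hC0 : 0 ≤ C := by positivity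
  have hDle : ∀ j : ℕ, Mu ^ j + Mnu ^ j ≤ 2 * C ^ j := by
    intro j
    have h1 : Mu ^ j ≤ C ^ j := pow_le_pow_left₀ hMu0 (by simp only [hCdef]; linarith) j
    have h2 : Mnu ^ j ≤ C ^ j := pow_le_pow_left₀ hMnu0 (by simp only [hCdef]; linarith) j
    linarith
  set q : ℝ := |t| / u with hqdef
  have hq0 : 0 ≤ q := div_nonneg (abs_nonneg _) hu0.le
  have hq1 : q < 1 := (div_lt_one hu0).mpr htu
  set c : ℕ → ℝ := fun n => (Nat.factorial n : ℝ) * (1 / u) ^ n * Real.exp (u * r) with hcdef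
  have hc0 : ∀ n, 0 ≤ c n := fun n => by simp only [hcdef]; positivity
  have hcq : ∀ n : ℕ, c n * |t| ^ n / (Nat.factorial n : ℝ) = q ^ n * Real.exp (u * r) := by
    intro n
    have h1 : ((Nat.factorial n : ℝ)) ≠ 0 := by positivity
    have hu' : u ≠ 0 := ne_of_gt hu0
    simp only [hcdef, hqdef]
    rw [div_pow]
    field_simp
    ring_nf
    rw [mul_assoc, ← mul_pow, mul_inv_cancel₀ hu', one_pow, mul_one]
  -- pointwise bound
  have hptw : ∀ (n j : ℕ) (ω : Ω), |Sm Ys j ω + (r:ℝ)| ^ n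
      ≤ c n * (Real.exp (u * Sm Ys j ω) + Real.exp (-u * Sm Ys j ω)) := by
    intro n j ω
    have habs : |Sm Ys j ω + (r:ℝ)| ≤ |Sm Ys j ω| + r := by
      calc |Sm Ys j ω + (r:ℝ)| ≤ |Sm Ys j ω| + |(r:ℝ)| := abs_add_le _ _
        _ = |Sm Ys j ω| + r := by rw [abs_of_nonneg (by positivity : (0:ℝ) ≤ (r:ℝ))]
    calc |Sm Ys j ω + (r:ℝ)| ^ n
        ≤ (Nat.factorial n : ℝ) * (1/u) ^ n * Real.exp (u * |Sm Ys j ω + (r:ℝ)|) :=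
          abs_pow_le_exp hu0 _ n
      _ ≤ (Nat.factorial n : ℝ) * (1/u) ^ n *
            (Real.exp (u * r) * (Real.exp (u * Sm Ys j ω) + Real.exp (-u * Sm Ys j ω))) := by
          apply mul_le_mul_of_nonneg_left ?_ (by positivity)
          calc Real.exp (u * |Sm Ys j ω + (r:ℝ)|)
              ≤ Real.exp (u * (|Sm Ys j ω| + r)) :=
                Real.exp_le_exp.mpr (mul_le_mul_of_nonneg_left habs hu0.le)
            _ = Real.exp (u * r) * Real.exp (u * |Sm Ys j ω|) := by
                rw [← Real.exp_add]; ring_nf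
            _ ≤ Real.exp (u * r) * (Real.exp (u * Sm Ys j ω) + Real.exp (-u * Sm Ys j ω)) := by
                apply mul_le_mul_of_nonneg_left (exp_mul_abs_le u _) (Real.exp_pos _).le
      _ = c n * (Real.exp (u * Sm Ys j ω) + Real.exp (-u * Sm Ys j ω)) := by
          simp only [hcdef]; ring
  -- integrability of (S_j + r)^n
  have hSr_int : ∀ n j : ℕ, Integrable (fun ω => (Sm Ys j ω + (r:ℝ)) ^ n) μ := by
    intro n j
    refine Integrable.mono'
      (((hSint_exp u huε j).add (hSint_exp (-u) hnuε j)).const_mul (c n))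
      ((((hSmeas j).add_const _).pow_const n).aestronglyMeasurable)
      (Filter.Eventually.of_forall fun ω => ?_)
    rw [Real.norm_eq_abs, abs_pow]
    exact hptw n j ω
  -- the moment bound
  have hm_abs : ∀ n j : ℕ, ∫ ω, |(Sm Ys j ω + (r:ℝ)) ^ n| ∂μ ≤ c n * (Mu ^ j + Mnu ^ j) := by
    intro n j
    have hGi : Integrable
        (fun ω => c n * (Real.exp (u * Sm Ys j ω) + Real.exp (-u * Sm Ys j ω))) μ :=
      ((hSint_exp u huε j).add (hSint_exp (-u) hnuε j)).const_mul (c n)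
    have hmono := integral_mono ((hSr_int n j).abs) hGi
      (fun ω => by rw [abs_pow]; exact hptw n j ω)
    rwa [integral_const_mul,
      integral_add (hSint_exp u huε j) (hSint_exp (-u) hnuε j),
      hmgfS u huε j, hmgfS (-u) hnuε j] at hmono
  have hm_bound : ∀ n j : ℕ, |mm μ Ys r n j| ≤ c n * (Mu ^ j + Mnu ^ j) := by
    intro n j
    have h := norm_integral_le_integral_norm (μ := μ) (f := fun ω => (Sm Ys j ω + (r:ℝ)) ^ n)
    simp only [Real.norm_eq_abs] at h
    exact h.trans (hm_abs n j)
  have hmterm : ∀ n j : ℕ, |mm μ Ys r n j * t ^ n / (Nat.factorial n : ℝ)|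
      ≤ q ^ n * (2 * Real.exp (u * r)) * C ^ j := by
    intro n j
    have hfac0 : (0:ℝ) < (Nat.factorial n : ℝ) := by positivity
    rw [abs_div, abs_mul, abs_pow, Nat.abs_cast]
    calc |mm μ Ys r n j| * |t| ^ n / (Nat.factorial n : ℝ)
        ≤ (c n * (Mu ^ j + Mnu ^ j)) * |t| ^ n / (Nat.factorial n : ℝ) := by
          apply (div_le_div_iff_of_pos_right hfac0).mpr
          exact mul_le_mul_of_nonneg_right (hm_bound n j) (by positivity)
      _ = (c n * |t| ^ n / (Nat.factorial n : ℝ)) * (Mu ^ j + Mnu ^ j) := by ring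
      _ = q ^ n * Real.exp (u * r) * (Mu ^ j + Mnu ^ j) := by rw [hcq n]
      _ ≤ q ^ n * Real.exp (u * r) * (2 * C ^ j) := by
          apply mul_le_mul_of_nonneg_left (hDle j) (by positivity)
      _ = q ^ n * (2 * Real.exp (u * r)) * C ^ j := by ring
  -- integrability of powers of Y and Ys
  have hYint_pow : ∀ nn : ℕ, Integrable (fun ω => Y ω ^ nn) μ := by
    intro nn
    refine Integrable.mono'
      (((hmgf u huε).add (hmgf (-u) hnuε)).const_mul ((Nat.factorial nn : ℝ) * (1 / u) ^ nn))
      ((hY.pow_const nn).aestronglyMeasurable)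
      (Filter.Eventually.of_forall fun ω => ?_)
    rw [Real.norm_eq_abs, abs_pow]
    calc |Y ω| ^ nn ≤ (Nat.factorial nn : ℝ) * (1 / u) ^ nn * Real.exp (u * |Y ω|) :=
          abs_pow_le_exp hu0 _ nn
      _ ≤ (Nat.factorial nn : ℝ) * (1 / u) ^ nn *
            (Real.exp (u * Y ω) + Real.exp (-u * Y ω)) :=
          mul_le_mul_of_nonneg_left (exp_mul_abs_le u _) (by positivity)
  have hYs_pow_int : ∀ (i nn : ℕ), Integrable (fun ω => Ys i ω ^ nn) μ := fun i nn =>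
    ((hident i).comp (measurable_id.pow_const nn)).integrable_iff.mpr (hYint_pow nn)
  have hYs_pow_eq : ∀ (i nn : ℕ), ∫ ω, Ys i ω ^ nn ∂μ = ∫ ω, Y ω ^ nn ∂μ := fun i nn =>
    ((hident i).comp (measurable_id.pow_const nn)).integral_eq
  -- the moment recursion
  have hrec : ∀ n j : ℕ, mm μ Ys r n (j + 1) = mm μ Ys r n j +
      ∑ i ∈ Finset.range n, ((n.choose i : ℝ) * (∫ ω, Y ω ^ (n - i) ∂μ)) * mm μ Ys r i j := by
    intro n j
    have hindepSY : IndepFun (Sm Ys j) (Ys j) μ := by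
      have h := hindep.indepFun_finsetSum_of_notMem hYs
        (by simp : j ∉ Finset.range j)
      have heq : (∑ i ∈ Finset.range j, Ys i) = Sm Ys j := by
        funext ω; simp [Sm, Finset.sum_apply]
      rwa [heq] at h
    have hprod_indep : ∀ i nn : ℕ,
        IndepFun (fun ω => (Sm Ys j ω + (r:ℝ)) ^ i) (fun ω => Ys j ω ^ nn) μ := fun i nn =>
      hindepSY.comp ((measurable_id.add_const _).pow_const i) (measurable_id.pow_const nn)
    have hsplit : ∀ ω : Ω, Sm Ys (j+1) ω + (r:ℝ) = (Sm Ys j ω + (r:ℝ)) + Ys j ω := by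
      intro ω; simp [Sm, Finset.sum_range_succ]; ring
    have hterm_int : ∀ i ∈ Finset.range (n+1),
        Integrable (fun ω => (Sm Ys j ω + (r:ℝ)) ^ i * Ys j ω ^ (n - i)
          * (n.choose i : ℝ)) μ := fun i _ =>
      ((hprod_indep i (n-i)).integrable_mul (hSr_int i j) (hYs_pow_int j (n-i))).mul_const _
    have hfull : mm μ Ys r n (j+1) = ∑ i ∈ Finset.range (n+1),
        ((n.choose i : ℝ) * (∫ ω, Y ω ^ (n - i) ∂μ)) * mm μ Ys r i j := by
      calc mm μ Ys r n (j+1)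
          = ∫ ω, ((Sm Ys j ω + (r:ℝ)) + Ys j ω) ^ n ∂μ := by
            unfold mm
            exact integral_congr_ae (Filter.Eventually.of_forall fun ω => by
              beta_reduce; rw [hsplit ω])
        _ = ∫ ω, ∑ i ∈ Finset.range (n+1),
              (Sm Ys j ω + (r:ℝ)) ^ i * Ys j ω ^ (n - i) * (n.choose i : ℝ) ∂μ :=
            integral_congr_ae (Filter.Eventually.of_forall fun ω => by
              beta_reduce; rw [add_pow])
        _ = ∑ i ∈ Finset.range (n+1),
              ∫ ω, (Sm Ys j ω + (r:ℝ)) ^ i * Ys j ω ^ (n - i) * (n.choose i : ℝ) ∂μ :=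
            integral_finset_sum _ hterm_int
        _ = ∑ i ∈ Finset.range (n+1),
              ((n.choose i : ℝ) * (∫ ω, Y ω ^ (n - i) ∂μ)) * mm μ Ys r i j := by
            refine Finset.sum_congr rfl fun i _ => ?_
            rw [integral_mul_const,
              (hprod_indep i (n-i)).integral_fun_mul_eq_mul_integral
                (((hSmeas j).add_const _).pow_const i).aestronglyMeasurable
                ((hYs j).pow_const (n-i)).aestronglyMeasurable,
              hYs_pow_eq j (n-i)]
            unfold mm
            ring
    rw [hfull, Finset.sum_range_succ]
    have hlast : ((n.choose n : ℝ) * (∫ ω, Y ω ^ (n - n) ∂μ)) * mm μ Ys r n j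
        = mm μ Ys r n j := by
      simp [Nat.choose_self, Nat.sub_self]
    rw [hlast]
    ring
  -- vanishing of the Stirling numbers above the diagonal
  have hPSzero : ∀ n k : ℕ, n < k → probStirling μ Ys r n k = 0 := by
    intro n k hnk
    have h2 := delta_vanish (fun n j => mm μ Ys r n j)
      (fun n i => (n.choose i : ℝ) * (∫ ω, Y ω ^ (n - i) ∂μ)) hrec n k hnk
    rw [fwdDiff_iter_zero_eq] at h2
    rw [hstir n k, h2, mul_zero]
  -- exponential generating function of the moments, for fixed j
  set E : ℕ → ℝ := fun j => ∫ ω, Real.exp (t * (Sm Ys j ω + (r:ℝ))) ∂μ with hEdef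
  have hE : ∀ j : ℕ, HasSum (fun n => mm μ Ys r n j * t ^ n / (Nat.factorial n : ℝ)) (E j) := by
    intro j
    have hFint : ∀ n : ℕ,
        Integrable (fun ω => (Sm Ys j ω + (r:ℝ)) ^ n * t ^ n / (Nat.factorial n : ℝ)) μ :=
      fun n => ((hSr_int n j).mul_const _).div_const _
    have hnorm_eq : ∀ n : ℕ,
        ∫ ω, ‖(Sm Ys j ω + (r:ℝ)) ^ n * t ^ n / (Nat.factorial n : ℝ)‖ ∂μ
          = (∫ ω, |(Sm Ys j ω + (r:ℝ)) ^ n| ∂μ) * (|t| ^ n / (Nat.factorial n : ℝ)) := by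
      intro n
      rw [← integral_mul_const]
      refine integral_congr_ae (Filter.Eventually.of_forall fun ω => ?_)
      beta_reduce
      rw [Real.norm_eq_abs, abs_div, abs_mul, abs_pow (t), Nat.abs_cast]
      ring
    have hFsum : Summable (fun n : ℕ =>
        ∫ ω, ‖(Sm Ys j ω + (r:ℝ)) ^ n * t ^ n / (Nat.factorial n : ℝ)‖ ∂μ) := by
      refine Summable.of_nonneg_of_le
        (fun n => integral_nonneg fun ω => norm_nonneg _) (fun n => ?_)
        ((summable_geometric_of_lt_one hq0 hq1).mul_right
          (Real.exp (u * r) * (Mu ^ j + Mnu ^ j)))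
      rw [hnorm_eq n]
      calc (∫ ω, |(Sm Ys j ω + (r:ℝ)) ^ n| ∂μ) * (|t| ^ n / (Nat.factorial n : ℝ))
          ≤ (c n * (Mu ^ j + Mnu ^ j)) * (|t| ^ n / (Nat.factorial n : ℝ)) :=
            mul_le_mul_of_nonneg_right (hm_abs n j) (by positivity)
        _ = (c n * |t| ^ n / (Nat.factorial n : ℝ)) * (Mu ^ j + Mnu ^ j) := by ring
        _ = q ^ n * (Real.exp (u * r) * (Mu ^ j + Mnu ^ j)) := by rw [hcq n]; ring
    have h := hasSum_integral_of_summable_integral_norm hFint hFsum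
    have h1 : (fun n : ℕ => ∫ ω, (Sm Ys j ω + (r:ℝ)) ^ n * t ^ n / (Nat.factorial n : ℝ) ∂μ)
        = fun n : ℕ => mm μ Ys r n j * t ^ n / (Nat.factorial n : ℝ) := by
      funext n
      rw [integral_div, integral_mul_const]
      rfl
    have h2 : ∫ ω, (∑' n : ℕ, (Sm Ys j ω + (r:ℝ)) ^ n * t ^ n / (Nat.factorial n : ℝ)) ∂μ
        = E j := by
      refine integral_congr_ae (Filter.Eventually.of_forall fun ω => ?_)
      have hh := hasSum_exp_real (t * (Sm Ys j ω + (r:ℝ)))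
      have hfe : (fun n : ℕ => (t * (Sm Ys j ω + (r:ℝ))) ^ n / (Nat.factorial n : ℝ))
          = fun n : ℕ => (Sm Ys j ω + (r:ℝ)) ^ n * t ^ n / (Nat.factorial n : ℝ) := by
        funext n; rw [mul_pow]; ring
      rw [hfe] at hh
      exact hh.tsum_eq
    rw [← h1, ← h2]
    exact h
  have hEval : ∀ j : ℕ, E j = Real.exp (r * t) * Mt ^ j := by
    intro j
    calc E j = ∫ ω, Real.exp (t * Sm Ys j ω) * Real.exp (t * r) ∂μ := by
          rw [hEdef]
          refine integral_congr_ae (Filter.Eventually.of_forall fun ω => ?_)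
          beta_reduce
          rw [mul_add, Real.exp_add]
      _ = (∫ ω, Real.exp (t * Sm Ys j ω) ∂μ) * Real.exp (t * r) := integral_mul_const _ _
      _ = Mt ^ j * Real.exp (t * r) := by rw [hmgfS t htε j]
      _ = Real.exp (r * t) * Mt ^ j := by rw [mul_comm t (r:ℝ)]; ring
  -- the coefficient function and the triple-indexed family
  set A : ℕ → ℕ → ℝ := fun k j =>
    if j ≤ k then x ^ k / (Nat.factorial k : ℝ) * (k.choose j : ℝ) * (-1) ^ (k - j) else 0
    with hAdef
  set g : ℕ × ℕ × ℕ → ℝ := fun p =>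
    A p.2.1 p.2.2 * (mm μ Ys r p.1 p.2.2 * t ^ p.1 / (Nat.factorial p.1 : ℝ)) with hgdef
  have hAbound : ∀ k j : ℕ, |A k j| ≤ |x| ^ k / (Nat.factorial k : ℝ) * (k.choose j : ℝ) := by
    intro k j
    simp only [hAdef]
    split
    · have h1 : |(-1 : ℝ) ^ (k - j)| = 1 := by
        rw [abs_pow, abs_neg, abs_one, one_pow]
      rw [abs_mul, h1, mul_one, abs_mul, abs_div, abs_pow, Nat.abs_cast, Nat.abs_cast]
    · rw [abs_zero]
      positivity
  have hgbound : ∀ p : ℕ × ℕ × ℕ, ‖g p‖ ≤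
      (|x| ^ p.2.1 / (Nat.factorial p.2.1 : ℝ) * (p.2.1.choose p.2.2 : ℝ) * C ^ p.2.2)
        * (q ^ p.1 * (2 * Real.exp (u * r))) := by
    rintro ⟨n, k, j⟩
    simp only [hgdef, Real.norm_eq_abs]
    rw [abs_mul]
    calc |A k j| * |mm μ Ys r n j * t ^ n / (Nat.factorial n : ℝ)|
        ≤ (|x| ^ k / (Nat.factorial k : ℝ) * (k.choose j : ℝ))
            * (q ^ n * (2 * Real.exp (u * r)) * C ^ j) :=
          mul_le_mul (hAbound k j) (hmterm n j) (abs_nonneg _) (by positivity)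
            
      _ = (|x| ^ k / (Nat.factorial k : ℝ) * (k.choose j : ℝ) * C ^ j)
            * (q ^ n * (2 * Real.exp (u * r))) := by ring
  -- summability of the dominating family
  have hgeo : Summable (fun n : ℕ => q ^ n * (2 * Real.exp (u * r))) :=
    (summable_geometric_of_lt_one hq0 hq1).mul_right _
  have hgeo0 : ∀ n : ℕ, 0 ≤ q ^ n * (2 * Real.exp (u * r)) := fun n => by positivity
  have hCp : ∀ j : ℕ, (0:ℝ) ≤ C ^ j := fun j => pow_nonneg hC0 j
  have hhnn : ∀ k j : ℕ, (0:ℝ) ≤ |x| ^ k / (Nat.factorial k : ℝ) * (k.choose j : ℝ) * C ^ j :=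
    fun k j => mul_nonneg (mul_nonneg (by positivity) (Nat.cast_nonneg _)) (hCp j)
  have hKsum : ∀ j : ℕ, Summable (fun k : ℕ =>
      |x| ^ k / (Nat.factorial k : ℝ) * (k.choose j : ℝ) * C ^ j) := by
    intro j
    refine Summable.of_nonneg_of_le (fun k => hhnn k j) (fun k => ?_)
      (Real.summable_pow_div_factorial (|x| * (C + 1)))
    by_cases hjk : j ≤ k
    · have h1 : (k.choose j : ℝ) * C ^ j ≤ (C + 1) ^ k := by
        calc (k.choose j : ℝ) * C ^ j = C ^ j * 1 ^ (k - j) * (k.choose j : ℝ) := by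
              rw [one_pow]; ring
          _ ≤ ∑ i ∈ Finset.range (k + 1), C ^ i * 1 ^ (k - i) * (k.choose i : ℝ) :=
            Finset.single_le_sum (f := fun i => C ^ i * 1 ^ (k - i) * (k.choose i : ℝ))
              (fun i _ => mul_nonneg (mul_nonneg (hCp i) (by positivity)) (Nat.cast_nonneg _))
              (Finset.mem_range.mpr (by omega))
          _ = (C + 1) ^ k := (add_pow C 1 k).symm
      calc |x| ^ k / (Nat.factorial k : ℝ) * (k.choose j : ℝ) * C ^ j
          = |x| ^ k / (Nat.factorial k : ℝ) * ((k.choose j : ℝ) * C ^ j) := by ring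
        _ ≤ |x| ^ k / (Nat.factorial k : ℝ) * (C + 1) ^ k :=
            mul_le_mul_of_nonneg_left h1 (by positivity)
        _ = (|x| * (C + 1)) ^ k / (Nat.factorial k : ℝ) := by rw [mul_pow]; ring
    · have hz : k.choose j = 0 := Nat.choose_eq_zero_of_lt (by omega)
      rw [hz]
      simp only [Nat.cast_zero, mul_zero, zero_mul]
      exact div_nonneg (pow_nonneg (mul_nonneg (abs_nonneg _) (by linarith)) _)
        (Nat.cast_nonneg _)
  have hh : Summable (fun kj : ℕ × ℕ =>
      |x| ^ kj.1 / (Nat.factorial kj.1 : ℝ) * (kj.1.choose kj.2 : ℝ) * C ^ kj.2) := by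
    refine (summable_prod_of_nonneg (Pi.le_def.mpr fun kj => hhnn kj.1 kj.2)).mpr ⟨?_, ?_⟩
    · intro k
      refine summable_of_ne_finset_zero (s := Finset.range (k + 1)) fun j hj => ?_
      have hkj : k < j := by by_contra hcon; exact hj (Finset.mem_range.mpr (by omega))
      have hz : k.choose j = 0 := Nat.choose_eq_zero_of_lt hkj
      simp only [hz, Nat.cast_zero, mul_zero, zero_mul]
    · have hval : ∀ k : ℕ,
          (∑' j : ℕ, |x| ^ k / (Nat.factorial k : ℝ) * (k.choose j : ℝ) * C ^ j)
          = |x| ^ k / (Nat.factorial k : ℝ) * (C + 1) ^ k := by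
        intro k
        rw [tsum_eq_sum (s := Finset.range (k + 1)) (fun j hj => by
          have hkj : k < j := by by_contra hcon; exact hj (Finset.mem_range.mpr (by omega))
          have hz : k.choose j = 0 := Nat.choose_eq_zero_of_lt hkj
          simp only [hz, Nat.cast_zero, mul_zero, zero_mul])]
        calc ∑ j ∈ Finset.range (k + 1),
              |x| ^ k / (Nat.factorial k : ℝ) * (k.choose j : ℝ) * C ^ j
            = ∑ j ∈ Finset.range (k + 1),
                |x| ^ k / (Nat.factorial k : ℝ) * (C ^ j * 1 ^ (k - j) * (k.choose j : ℝ)) :=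
              Finset.sum_congr rfl fun j _ => by rw [one_pow]; ring
          _ = |x| ^ k / (Nat.factorial k : ℝ)
                * ∑ j ∈ Finset.range (k + 1), C ^ j * 1 ^ (k - j) * (k.choose j : ℝ) :=
              (Finset.mul_sum _ _ _).symm
          _ = |x| ^ k / (Nat.factorial k : ℝ) * (C + 1) ^ k := by rw [← add_pow]
      rw [funext hval]
      have h2 : ∀ k : ℕ, |x| ^ k / (Nat.factorial k : ℝ) * (C + 1) ^ k
          = (|x| * (C + 1)) ^ k / (Nat.factorial k : ℝ) := fun k => by rw [mul_pow]; ring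
      rw [funext h2]
      exact Real.summable_pow_div_factorial _
  have hWf : Summable (fun p : ℕ × ℕ × ℕ =>
      (|x| ^ p.2.1 / (Nat.factorial p.2.1 : ℝ) * (p.2.1.choose p.2.2 : ℝ) * C ^ p.2.2)
        * (q ^ p.1 * (2 * Real.exp (u * r)))) := by
    have h := hgeo.mul_of_nonneg hh hgeo0 (fun kj => hhnn kj.1 kj.2)
    exact h.congr fun p => mul_comm _ _
  have hgsum : Summable g := Summable.of_norm_bounded hWf hgbound
  have hslice1 : ∀ n : ℕ, Summable (fun kj : ℕ × ℕ => g (n, kj)) := by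
    intro n
    refine Summable.of_norm_bounded (hh.mul_right (q ^ n * (2 * Real.exp (u * r)))) ?_
    intro kj
    exact hgbound (n, kj)
  have hslice2 : ∀ j : ℕ, Summable (fun kn : ℕ × ℕ => g (kn.2, kn.1, j)) := by
    intro j
    refine Summable.of_norm_bounded
      ((hKsum j).mul_of_nonneg hgeo (fun k => hhnn k j) hgeo0) ?_
    intro kn
    exact hgbound (kn.2, kn.1, j)
  -- Way A : sum over n first
  set T : ℝ := ∑' p : ℕ × ℕ × ℕ, g p with hTdef
  have hgT : HasSum g T := hgsum.hasSum
  have hA1 : ∀ n : ℕ, HasSum (fun kj : ℕ × ℕ => g (n, kj))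
      (probBell μ Ys r n x * t ^ n / (Nat.factorial n : ℝ)) := by
    intro n
    have hkfib : ∀ k : ℕ, HasSum (fun j : ℕ => g (n, k, j))
        (x ^ k * probStirling μ Ys r n k * (t ^ n / (Nat.factorial n : ℝ))) := by
      intro k
      have hvan : ∀ j ∉ Finset.range (k + 1), g (n, k, j) = 0 := by
        intro j hj
        have hkj : k < j := by by_contra hcon; exact hj (Finset.mem_range.mpr (by omega))
        simp only [hgdef, hAdef]
        rw [if_neg (by omega)]
        ring
      have h0 : HasSum _ _ := hasSum_sum_of_ne_finset_zero hvan
      have hsum : ∑ j ∈ Finset.range (k + 1), g (n, k, j)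
          = x ^ k * probStirling μ Ys r n k * (t ^ n / (Nat.factorial n : ℝ)) := by
        calc ∑ j ∈ Finset.range (k + 1), g (n, k, j)
            = ∑ j ∈ Finset.range (k + 1),
                x ^ k * (1 / (Nat.factorial k : ℝ))
                  * ((k.choose j : ℝ) * (-1) ^ (k - j) * mm μ Ys r n j)
                  * (t ^ n / (Nat.factorial n : ℝ)) := by
              refine Finset.sum_congr rfl fun j hj => ?_
              have hjk : j ≤ k := by
                have := Finset.mem_range.mp hj; omega
              simp only [hgdef, hAdef]
              rw [if_pos hjk]
              ring
          _ = x ^ k * (1 / (Nat.factorial k : ℝ)) * (∑ j ∈ Finset.range (k + 1),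
                (k.choose j : ℝ) * (-1) ^ (k - j) * mm μ Ys r n j)
                * (t ^ n / (Nat.factorial n : ℝ)) := by
              rw [← Finset.sum_mul, ← Finset.mul_sum]
          _ = x ^ k * probStirling μ Ys r n k * (t ^ n / (Nat.factorial n : ℝ)) := by
              rw [hstir n k]; ring
      rwa [hsum] at h0
    have hfamA := (hslice1 n).hasSum
    have hmargA := hfamA.prod_fiberwise hkfib
    have hvkzero : ∀ k ∉ Finset.range (n + 1),
        x ^ k * probStirling μ Ys r n k * (t ^ n / (Nat.factorial n : ℝ)) = 0 := by
      intro k hk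
      have hnk : n < k := by by_contra hcon; exact hk (Finset.mem_range.mpr (by omega))
      rw [hPSzero n k hnk]; ring
    have hdir : HasSum _ _ := hasSum_sum_of_ne_finset_zero hvkzero
    have hbell : ∑ k ∈ Finset.range (n + 1),
        x ^ k * probStirling μ Ys r n k * (t ^ n / (Nat.factorial n : ℝ))
        = probBell μ Ys r n x * t ^ n / (Nat.factorial n : ℝ) := by
      simp only [probBell]
      rw [Finset.sum_mul, Finset.sum_div]
      exact Finset.sum_congr rfl fun k _ => by ring
    rw [hbell] at hdir
    rwa [hmargA.unique hdir] at hfamA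
  have hWayA : HasSum (fun n : ℕ => probBell μ Ys r n x * t ^ n / (Nat.factorial n : ℝ)) T :=
    hgT.prod_fiberwise hA1
  -- Way B : sum over j first
  have hg2sum : Summable (fun p : ℕ × ℕ × ℕ => g (p.2.2, p.2.1, p.1)) :=
    ((⟨fun p => (p.2.2, p.2.1, p.1), fun p => (p.2.2, p.2.1, p.1), fun p => rfl,
      fun p => rfl⟩ : (ℕ × ℕ × ℕ) ≃ (ℕ × ℕ × ℕ)).summable_iff).mpr hgsum
  have hg2tsum : (∑' p : ℕ × ℕ × ℕ, g (p.2.2, p.2.1, p.1)) = T := by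
    rw [hTdef]
    exact (⟨fun p => (p.2.2, p.2.1, p.1), fun p => (p.2.2, p.2.1, p.1), fun p => rfl,
      fun p => rfl⟩ : (ℕ × ℕ × ℕ) ≃ (ℕ × ℕ × ℕ)).tsum_eq g
  have hg2 : HasSum (fun p : ℕ × ℕ × ℕ => g (p.2.2, p.2.1, p.1)) T := by
    have h := hg2sum.hasSum
    rwa [hg2tsum] at h
  set w : ℕ → ℝ := fun j => x ^ j / (Nat.factorial j : ℝ) * E j * Real.exp (-x) with hwdef
  have hfib2 : ∀ j : ℕ, HasSum (fun kn : ℕ × ℕ => g (kn.2, kn.1, j)) (w j) := by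
    intro j
    have hkn : ∀ k : ℕ, HasSum (fun n : ℕ => g (n, k, j)) (A k j * E j) := by
      intro k
      simp only [hgdef]
      exact (hE j).mul_left (A k j)
    have hfam := (hslice2 j).hasSum
    have hmarg := hfam.prod_fiberwise hkn
    have hdirect : HasSum (fun k : ℕ => A k j * E j) (w j) := by
      have hexpx := (hasSum_exp_real (-x)).mul_left (x ^ j / (Nat.factorial j : ℝ) * E j)
      have h3 : ∀ nn : ℕ, x ^ j / (Nat.factorial j : ℝ) * E j
          * ((-x) ^ nn / (Nat.factorial nn : ℝ)) = A (nn + j) j * E j := by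
        intro nn
        have hch : ((nn + j).choose j : ℝ)
            = ((nn + j).factorial : ℝ)
              / ((Nat.factorial nn : ℝ) * (Nat.factorial j : ℝ)) := by
          rw [eq_div_iff (by positivity), ← mul_assoc]
          exact_mod_cast congrArg (Nat.cast (R := ℝ))
            (Nat.add_choose_mul_factorial_mul_factorial nn j)
        simp only [hAdef]
        rw [if_pos (Nat.le_add_left j nn), hch, Nat.add_sub_cancel]
        have hnegx : (-x) ^ nn = (-1) ^ nn * x ^ nn := by rw [neg_pow]
        have hf1 : ((nn + j).factorial : ℝ) ≠ 0 := by positivity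
        have hf2 : (Nat.factorial nn : ℝ) ≠ 0 := by positivity
        have hf3 : (Nat.factorial j : ℝ) ≠ 0 := by positivity
        rw [hnegx]
        field_simp
        ring
      rw [funext h3] at hexpx
      have h5 := (hasSum_nat_add_iff (f := fun k => A k j * E j) j).mp hexpx
      have h6 : ∑ i ∈ Finset.range j, A i j * E j = 0 :=
        Finset.sum_eq_zero fun i hi => by
          have hij : i < j := Finset.mem_range.mp hi
          simp only [hAdef]
          rw [if_neg (by omega)]
          ring
      rw [h6, add_zero] at h5
      simp only [hwdef]
      exact h5
    rwa [hmarg.unique hdirect] at hfam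
  have hWayB : HasSum w T := hg2.prod_fiberwise hfib2
  have hwdir : HasSum w (Real.exp (x * (Mt - 1)) * Real.exp (r * t)) := by
    have h := (hasSum_exp_real (x * Mt)).mul_right (Real.exp (r * t) * Real.exp (-x))
    have hwj : ∀ j : ℕ, (x * Mt) ^ j / (Nat.factorial j : ℝ)
        * (Real.exp (r * t) * Real.exp (-x)) = w j := by
      intro j
      simp only [hwdef]
      rw [hEval j, mul_pow]
      ring
    rw [funext hwj] at h
    have hval : Real.exp (x * Mt) * (Real.exp (r * t) * Real.exp (-x))
        = Real.exp (x * (Mt - 1)) * Real.exp (r * t) := by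
      rw [show x * (Mt - 1) = x * Mt + -x by ring, Real.exp_add]
      ring
    rwa [hval] at h
  have hTR : T = Real.exp (x * (Mt - 1)) * Real.exp (r * t) := hWayB.unique hwdir
  rw [← hTR]
  exact hWayA
end

section
/- For all integers n, l ≥ 0 and every real y, the Bell polynomials satisfy φ_{l+n}(y) = Σ_{k=0}^{n} Σ_{m=0}^{l} binom(l,m) y^k S(n,k) k^{l−m} φ_{m}(y), where 0^0 is interpreted as 1. -/
/-- The Stirling numbers of the second kind `S(n,k)`, counting the number of
partitions of an `n`-element set into `k` nonempty blocks, via the standard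
recurrence `S(n+1,k+1) = (k+1) S(n,k+1) + S(n,k)`. -/
def stirling2 : ℕ → ℕ → ℕ
  | 0, 0 => 1
  | 0, _ + 1 => 0
  | _ + 1, 0 => 0
  | n + 1, k + 1 => (k + 1) * stirling2 n (k + 1) + stirling2 n k

/-- The Bell polynomials `φ_n(y) = Σ_{k=0}^n S(n,k) y^k`. -/
noncomputable def bellPoly (n : ℕ) (y : ℝ) : ℝ :=
  ∑ k ∈ Finset.range (n + 1), (stirling2 n k : ℝ) * y ^ k

open Polynomial Finset

lemma stirling2_eq_zero : ∀ {n k : ℕ}, n < k → stirling2 n k = 0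
  | 0, _ + 1, _ => rfl
  | n + 1, k + 1, h => by
      have h' : n < k := by omega
      simp [stirling2, stirling2_eq_zero h', stirling2_eq_zero (show n < k + 1 by omega)]

noncomputable def Bp (n : ℕ) : Polynomial ℝ :=
  ∑ k ∈ range (n + 1), C ((stirling2 n k : ℕ) : ℝ) * X ^ k

lemma Bp_zero : Bp 0 = 1 := by simp [Bp, stirling2]

lemma X_mul_aux (k : ℕ) : (X : ℝ[X]) * (C (k : ℝ) * X ^ (k - 1)) = C (k : ℝ) * X ^ k := by
  cases k with
  | zero => simp
  | succ j => rw [Nat.add_sub_cancel, pow_succ]; ring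

lemma Bp_succ (N : ℕ) : Bp (N + 1) = X * derivative (Bp N) + X * Bp N := by
  unfold Bp
  rw [derivative_sum, Finset.mul_sum, Finset.mul_sum]
  have h1 : ∀ k ∈ range (N + 1),
      (X : ℝ[X]) * derivative (C ((stirling2 N k : ℕ) : ℝ) * X ^ k)
        = C ((k * stirling2 N k : ℕ) : ℝ) * X ^ k := by
    intro k _
    rw [derivative_C_mul, derivative_X_pow, ← mul_assoc, mul_comm (X : ℝ[X]), mul_assoc,
      X_mul_aux, ← mul_assoc, ← C_mul]
    push_cast; ring_nf
  rw [Finset.sum_congr rfl h1]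
  -- first sum: peel k = 0 (term is zero), shift, then extend
  have h2 : ∑ k ∈ range (N + 1), C ((k * stirling2 N k : ℕ) : ℝ) * X ^ k
      = ∑ k ∈ range (N + 1), C (((k + 1) * stirling2 N (k + 1) : ℕ) : ℝ) * X ^ (k + 1) := by
    rw [Finset.sum_range_succ' (fun k => C ((k * stirling2 N k : ℕ) : ℝ) * X ^ k),
        Finset.sum_range_succ (fun k => C (((k + 1) * stirling2 N (k + 1) : ℕ) : ℝ) * X ^ (k + 1))]
    simp [stirling2_eq_zero (show N < N + 1 by omega)]
  rw [h2]
  rw [show (∑ k ∈ range (N + 1 + 1), C ((stirling2 (N + 1) k : ℕ) : ℝ) * X ^ k)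
      = ∑ k ∈ range (N + 1), C ((stirling2 (N + 1) (k + 1) : ℕ) : ℝ) * X ^ (k + 1)
      from by
    rw [Finset.sum_range_succ' (fun k => C ((stirling2 (N + 1) k : ℕ) : ℝ) * X ^ k)]
    simp [stirling2]]
  rw [← Finset.sum_add_distrib]
  refine Finset.sum_congr rfl fun k _ => ?_
  have : stirling2 (N + 1) (k + 1) = (k + 1) * stirling2 N (k + 1) + stirling2 N k := rfl
  rw [this]
  push_cast
  simp only [C_add, C_mul]
  ring

lemma step_term (c : ℝ) (k m : ℕ) :
    (X : ℝ[X]) * derivative (C c * (X ^ k * Bp m)) + X * (C c * (X ^ k * Bp m))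
      = C c * ((C (k : ℝ) * X ^ k) * Bp m + X ^ k * Bp (m + 1)) := by
  rw [derivative_C_mul, derivative_mul, derivative_X_pow, Bp_succ]
  linear_combination (C c * Bp m) * X_mul_aux k

lemma spiveyInnerAux (l k : ℕ) (s : ℝ) :
    ∑ m ∈ range (l + 2),
        C (((l + 1).choose m : ℝ) * s * (k : ℝ) ^ (l + 1 - m)) * (X ^ k * Bp m)
      = ∑ m ∈ range (l + 1),
        C ((l.choose m : ℝ) * s * (k : ℝ) ^ (l - m)) *
          ((C (k : ℝ) * X ^ k) * Bp m + X ^ k * Bp (m + 1)) := by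
  have hsplit : ∀ m ∈ range (l + 1),
      C ((l.choose m : ℝ) * s * (k : ℝ) ^ (l - m)) *
          ((C (k : ℝ) * X ^ k) * Bp m + X ^ k * Bp (m + 1))
        = C ((l.choose m : ℝ) * s * (k : ℝ) ^ (l - m) * k) * (X ^ k * Bp m)
          + C ((l.choose m : ℝ) * s * (k : ℝ) ^ (l - m)) * (X ^ k * Bp (m + 1)) := by
    intro m _
    simp only [C_mul]
    ring
  rw [Finset.sum_congr rfl hsplit, Finset.sum_add_distrib]
  -- peel the m = 0 term from the LHS
  rw [Finset.sum_range_succ'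
    (fun m => C (((l + 1).choose m : ℝ) * s * (k : ℝ) ^ (l + 1 - m)) * (X ^ k * Bp m))]
  have hshift : ∀ m ∈ range (l + 1),
      C (((l + 1).choose (m + 1) : ℝ) * s * (k : ℝ) ^ (l + 1 - (m + 1))) * (X ^ k * Bp (m + 1))
        = C ((l.choose (m + 1) : ℝ) * s * (k : ℝ) ^ (l - m)) * (X ^ k * Bp (m + 1))
          + C ((l.choose m : ℝ) * s * (k : ℝ) ^ (l - m)) * (X ^ k * Bp (m + 1)) := by
    intro m _
    have h1 : l + 1 - (m + 1) = l - m := by omega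
    rw [h1, Nat.choose_succ_succ]
    push_cast
    simp only [C_add, C_mul]
    ring
  rw [Finset.sum_congr rfl hshift, Finset.sum_add_distrib]
  -- now it suffices: Σ C(l.choose (m+1) ...) T(m+1)  + f 0 = Σ C(... * k) * T m
  have hA : ∑ m ∈ range (l + 1),
      C ((l.choose m : ℝ) * s * (k : ℝ) ^ (l - m) * k) * (X ^ k * Bp m)
      = ∑ m ∈ range l,
          C ((l.choose (m + 1) : ℝ) * s * (k : ℝ) ^ (l - (m + 1)) * k) * (X ^ k * Bp (m + 1))
        + C ((l.choose 0 : ℝ) * s * (k : ℝ) ^ (l - 0) * k) * (X ^ k * Bp 0) := by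
    rw [Finset.sum_range_succ'
      (fun m => C ((l.choose m : ℝ) * s * (k : ℝ) ^ (l - m) * k) * (X ^ k * Bp m))]
  rw [hA]
  have hB : ∑ m ∈ range (l + 1),
      C ((l.choose (m + 1) : ℝ) * s * (k : ℝ) ^ (l - m)) * (X ^ k * Bp (m + 1))
      = ∑ m ∈ range l,
          C ((l.choose (m + 1) : ℝ) * s * (k : ℝ) ^ (l - m)) * (X ^ k * Bp (m + 1)) := by
    rw [Finset.sum_range_succ]
    simp [Nat.choose_succ_self]
  rw [hB]
  have hC : ∀ m ∈ range l,
      C ((l.choose (m + 1) : ℝ) * s * (k : ℝ) ^ (l - (m + 1)) * k) * (X ^ k * Bp (m + 1))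
        = C ((l.choose (m + 1) : ℝ) * s * (k : ℝ) ^ (l - m)) * (X ^ k * Bp (m + 1)) := by
    intro m hm
    rw [Finset.mem_range] at hm
    have : (k : ℝ) ^ (l - (m + 1)) * k = (k : ℝ) ^ (l - m) := by
      rw [← pow_succ]
      congr 1
      omega
    rw [mul_assoc ((l.choose (m + 1) : ℝ) * s), this]
  rw [Finset.sum_congr rfl hC]
  have h0 : C (((l + 1).choose 0 : ℝ) * s * (k : ℝ) ^ (l + 1 - 0)) * (X ^ k * Bp 0)
      = C ((l.choose 0 : ℝ) * s * (k : ℝ) ^ (l - 0) * k) * (X ^ k * Bp 0) := by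
    simp only [Nat.sub_zero]
    congr 1
    push_cast [Nat.choose_zero_right]
    ring
  rw [h0]
  ring

lemma spivey_poly (n l : ℕ) :
    Bp (l + n) = ∑ k ∈ range (n + 1), ∑ m ∈ range (l + 1),
      C ((l.choose m : ℝ) * (stirling2 n k : ℝ) * (k : ℝ) ^ (l - m)) * (X ^ k * Bp m) := by
  induction l with
  | zero => simp [Bp, Bp_zero, show stirling2 0 0 = 1 from rfl]
  | succ l ih =>
    have h : l + 1 + n = (l + n) + 1 := by omega
    rw [h, Bp_succ, ih, derivative_sum, Finset.mul_sum, Finset.mul_sum,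
      ← Finset.sum_add_distrib]
    refine Finset.sum_congr rfl fun k _ => ?_
    rw [derivative_sum, Finset.mul_sum, Finset.mul_sum, ← Finset.sum_add_distrib]
    rw [Finset.sum_congr rfl
      (fun m _ => step_term ((l.choose m : ℝ) * (stirling2 n k : ℝ) * (k : ℝ) ^ (l - m)) k m)]
    exact (spiveyInnerAux l k ((stirling2 n k : ℝ))).symm

lemma Bp_eval (n : ℕ) (y : ℝ) : (Bp n).eval y = bellPoly n y := by
  simp [Bp, bellPoly, eval_finset_sum]

/-- Spivey's recurrence for the Bell polynomials. -/
theorem spivey_recurrence_bellPoly (n l : ℕ) (y : ℝ) :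
    bellPoly (l + n) y =
      ∑ k ∈ Finset.range (n + 1), ∑ m ∈ Finset.range (l + 1),
        (l.choose m : ℝ) * y ^ k * (stirling2 n k : ℝ) * (k : ℝ) ^ (l - m) *
          bellPoly m y := by
  have h := congrArg (Polynomial.eval y) (spivey_poly n l)
  simp only [eval_finset_sum, eval_mul, eval_C, eval_pow, eval_X, Bp_eval] at h
  rw [h]
  refine Finset.sum_congr rfl fun k _ => Finset.sum_congr rfl fun m _ => ?_
  ring
end
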